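/- Under the setting of the masking lemma with c = y⁽ⁿ⁺¹⁾, the in-context loss E[([Z_{k+1}]_{(d+1),(n+1)} + y⁽ⁿ⁺¹⁾)²] equals E[tr((I − M) Ȳ_{k+1}ᵀ Ȳ_{k+1} (I − M))], where Ȳ_{k+1} ∈ ℝ^{1×(n+1)} is the last row of the dynamics initialized at the unmasked input Z̄_0 (whose last row includes y⁽ⁿ⁺¹⁾), M = diag(I_n, 0), and I − M is the projection onto the (n+1)-th coordinate. -/
import Mathlib


open Matrix MeasureTheory

/-- First `d` rows of a `(d+1) × (n+1)` matrix. -/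
def Xrows {d n : ℕ} (Z : Matrix (Fin (d + 1)) (Fin (n + 1)) ℝ) :
    Matrix (Fin d) (Fin (n + 1)) ℝ :=
  Matrix.of fun i j => Z i.castSucc j

/-- Last row of a `(d+1) × (n+1)` matrix. -/
def Yrow {d n : ℕ} (Z : Matrix (Fin (d + 1)) (Fin (n + 1)) ℝ) : Fin (n + 1) → ℝ :=
  Z (Fin.last d)

/-- The mask matrix `M = diag(I_n, 0)`. -/
def maskM (n : ℕ) : Matrix (Fin (n + 1)) (Fin (n + 1)) ℝ :=
  Matrix.diagonal fun j => if j = Fin.last n then 0 else 1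

/-- Block value matrix `V = [[A,0],[0,r]]`. -/
def Vblock {d : ℕ} (A : Matrix (Fin d) (Fin d) ℝ) (r : ℝ) :
    Matrix (Fin (d + 1)) (Fin (d + 1)) ℝ :=
  Matrix.of fun i j =>
    if hi : i = Fin.last d then (if j = Fin.last d then r else 0)
    else if hj : j = Fin.last d then 0 else A (i.castPred hi) (j.castPred hj)

/-- Reformulating the in-context loss: with the masked trajectory `Z` (query label
zeroed out) and the unmasked trajectory `Z̄` (query label `y⁽ⁿ⁺¹⁾` included),
`E[([Z_{k+1}]_{(d+1),(n+1)} + y⁽ⁿ⁺¹⁾)²] = E[tr((I−M) Ȳ_{k+1}ᵀ Ȳ_{k+1} (I−M))]`. -/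
theorem icl_loss_trace_form
    {d n k : ℕ} {Ω : Type*} [MeasurableSpace Ω] (μ : Measure Ω)
    (htil : Matrix (Fin d) (Fin (n + 1)) ℝ → Matrix (Fin d) (Fin (n + 1)) ℝ →
      Matrix (Fin (n + 1)) (Fin (n + 1)) ℝ)
    (A : ℕ → Matrix (Fin d) (Fin d) ℝ) (r : ℕ → ℝ)
    (B C : ℕ → Matrix (Fin d) (Fin d) ℝ)
    (ynp1 : Ω → ℝ)
    (Z Zbar : Ω → ℕ → Matrix (Fin (d + 1)) (Fin (n + 1)) ℝ)
    (hrec : ∀ ω ℓ, Z ω (ℓ + 1) = Z ω ℓ +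
      Vblock (A ℓ) (r ℓ) * Z ω ℓ * maskM n *
        htil (B ℓ * Xrows (Z ω ℓ)) (C ℓ * Xrows (Z ω ℓ)))
    (hrecbar : ∀ ω ℓ, Zbar ω (ℓ + 1) = Zbar ω ℓ +
      Vblock (A ℓ) (r ℓ) * Zbar ω ℓ * maskM n *
        htil (B ℓ * Xrows (Zbar ω ℓ)) (C ℓ * Xrows (Zbar ω ℓ)))
    (hX0 : ∀ ω, Xrows (Zbar ω 0) = Xrows (Z ω 0))
    (hZ0last : ∀ ω, Yrow (Z ω 0) (Fin.last n) = 0)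
    (hY0 : ∀ ω, Yrow (Zbar ω 0) =
      Yrow (Z ω 0) + fun j => if j = Fin.last n then ynp1 ω else 0) :
    ∫ ω, (Z ω (k + 1) (Fin.last d) (Fin.last n) + ynp1 ω) ^ 2 ∂μ =
      ∫ ω, Matrix.trace ((1 - maskM n) *
        Matrix.vecMulVec (Yrow (Zbar ω (k + 1))) (Yrow (Zbar ω (k + 1))) *
          (1 - maskM n)) ∂μ := by
  have hdiag : (1 : Matrix (Fin (n+1)) (Fin (n+1)) ℝ) - maskM n =
      Matrix.diagonal (fun j => if j = Fin.last n then 1 else 0) := by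
    ext i j
    rcases eq_or_ne i j with rfl | hij
    · by_cases hi : i = Fin.last n <;> simp [maskM, Matrix.one_apply, hi]
    · simp [maskM, Matrix.one_apply, hij, Matrix.diagonal_apply_ne _ hij]
  have htr : ∀ v : Fin (n+1) → ℝ,
      Matrix.trace ((1 - maskM n) * Matrix.vecMulVec v v * (1 - maskM n)) =
        (v (Fin.last n)) ^ 2 := by
    intro v
    rw [hdiag]
    simp [Matrix.trace, Matrix.diag, Matrix.diagonal_mul, Matrix.mul_diagonal,
      Matrix.vecMulVec_apply, Finset.sum_ite_eq', sq, ite_and]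
  have key : ∀ ω ℓ, Zbar ω ℓ = Z ω ℓ +
      Matrix.of (fun i j => if i = Fin.last d ∧ j = Fin.last n then ynp1 ω else 0) := by
    intro ω ℓ
    set E : Matrix (Fin (d+1)) (Fin (n+1)) ℝ :=
      Matrix.of (fun i j => if i = Fin.last d ∧ j = Fin.last n then ynp1 ω else 0) with hE
    have hXE : ∀ W : Matrix (Fin (d+1)) (Fin (n+1)) ℝ, Xrows (W + E) = Xrows W := by
      intro W
      ext i j
      have : i.castSucc ≠ Fin.last d := (Fin.castSucc_lt_last i).ne
      simp [Xrows, hE, this]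
    have hEM : E * maskM n = 0 := by
      ext i j
      rw [maskM, Matrix.mul_diagonal]
      by_cases hj : j = Fin.last n <;> simp [hE, hj]
    induction ℓ with
    | zero =>
      ext i j
      rcases eq_or_ne i (Fin.last d) with hi | hi
      · subst hi
        have h := congrFun (hY0 ω) j
        simp only [Yrow, Pi.add_apply] at h
        simp only [Matrix.add_apply, Matrix.of_apply, hE]
        rw [h]
        by_cases hj : j = Fin.last n <;> simp [hj]
      · have h := congrFun (congrFun (hX0 ω) (i.castPred hi)) j
        simp only [Xrows, Matrix.of_apply, Fin.castSucc_castPred] at h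
        simp [Matrix.add_apply, hE, hi, h]
    | succ m ih =>
      rw [hrecbar, hrec, ih, hXE]
      have : (Z ω m + E) * maskM n = Z ω m * maskM n := by
        rw [Matrix.add_mul, hEM, add_zero]
      rw [Matrix.mul_add (Vblock (A m) (r m)), Matrix.add_mul, Matrix.mul_assoc (Vblock (A m) (r m)) E,
        hEM, Matrix.mul_zero, add_zero]
      abel
  have hpt : ∀ ω, (Z ω (k + 1) (Fin.last d) (Fin.last n) + ynp1 ω) ^ 2 =
      Matrix.trace ((1 - maskM n) *
        Matrix.vecMulVec (Yrow (Zbar ω (k + 1))) (Yrow (Zbar ω (k + 1))) * (1 - maskM n)) := by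
    intro ω
    rw [htr]
    have := congrFun (congrFun (key ω (k+1)) (Fin.last d)) (Fin.last n)
    simp only [Matrix.add_apply, Matrix.of_apply, and_self, if_true] at this
    simp [Yrow, this]
  exact integral_congr_ae (Filter.Eventually.of_forall hpt)
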